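/- arXiv:1308.4500 — 4 statements merged into one kernel-verified Lean document; each statement's English description precedes it below -/
import Mathlib

section
/- Let (U, ∘) be a loop with identity element e, let B ⊆ U \ {e}, and let η : U → U be a bijection with η(e) = e. Define a new binary operation ∘' on U by x ∘' y = x ∘ y if y ∉ B, and x ∘' y = y ∘ η(x) if y ∈ B. Then (U, ∘') is a right loop with identity e; that is, e ∘' x = x ∘' e = x for all x ∈ U, and for all x, y ∈ U the equation X ∘' x = y has a unique solution X in U. -/
/-- Let (U, ∘) be a loop with identity e, B ⊆ U \ {e}, and η : U → U a
bijection with η(e) = e. Define x ∘' y = x ∘ y if y ∉ B, and x ∘' y = y ∘ η(x) if y ∈ B.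
Then (U, ∘') is a right loop with identity e. -/
theorem modified_loop_is_right_loop {U : Type*} (op : U → U → U) (e : U)
    (hid : ∀ x, op e x = x ∧ op x e = x)
    (hright : ∀ x y : U, ∃! X, op X x = y)
    (hleft : ∀ x y : U, ∃! X, op x X = y)
    (B : Set U) (hB : B ⊆ {x | x ≠ e})
    (η : U → U) (hη : Function.Bijective η) (hηe : η e = e)
    (op' : U → U → U)
    (hop' : ∀ x y : U, (y ∉ B → op' x y = op x y) ∧ (y ∈ B → op' x y = op y (η x))) :
    (∀ x, op' e x = x ∧ op' x e = x) ∧ (∀ x y : U, ∃! X, op' X x = y) := by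
  have heB : e ∉ B := fun h => (hB h) rfl
  constructor
  · intro x
    constructor
    · by_cases hx : x ∈ B
      · rw [(hop' e x).2 hx, hηe, (hid x).2]
      · rw [(hop' e x).1 hx, (hid x).1]
    · rw [(hop' x e).1 heB, (hid x).2]
  · intro x y
    by_cases hx : x ∈ B
    · obtain ⟨Z, hZ, hZu⟩ := hleft x y
      obtain ⟨X, hX⟩ := hη.2 Z
      refine ⟨X, ?_, ?_⟩
      · show op' X x = y
        rw [(hop' X x).2 hx, hX, hZ]
      · intro W hW
        rw [(hop' W x).2 hx] at hW
        exact hη.1 (by rw [hX]; exact hZu _ hW)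
    · obtain ⟨X, hX, hXu⟩ := hright x y
      refine ⟨X, ?_, ?_⟩
      · show op' X x = y
        rw [(hop' X x).1 hx, hX]
      · intro W hW
        rw [(hop' W x).1 hx] at hW
        exact hXu _ hW
end

section
/- Let (L, ⋆) be an inverse property loop with identity 1, and let a, b ∈ L with 1/a ≠ 1 and b ≠ 1. Set B = {1/a, b} ⊆ L \ {1}, let η : L → L be a bijection with η(1) = 1, and define x ∘' y = x ⋆ y if y ∉ B and x ∘' y = y ⋆ η(x) if y ∈ B. Then, as bijections of L, R_b^{∘'} ∘ (R_{1/a}^{∘'})⁻¹ ∘ R_b^{∘'} ∘ (R_{1/a}^{∘'})⁻¹ = L_b^⋆ ∘ L_a^⋆ ∘ L_b^⋆ ∘ L_a^⋆, where R_u^{∘'}(x) = x ∘' u and L_u^⋆(x) = u ⋆ x. -/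
/-- Let (L, ⋆) be an I.P. loop with identity 1, a, b ∈ L with 1/a ≠ 1 and
b ≠ 1, B = {1/a, b}, η a bijection fixing 1, and ∘' the modified operation
(x ∘' y = x ⋆ y if y ∉ B, x ∘' y = y ⋆ η(x) if y ∈ B).  Then, as bijections of L,
R_b^{∘'} ∘ (R_{1/a}^{∘'})⁻¹ ∘ R_b^{∘'} ∘ (R_{1/a}^{∘'})⁻¹ = L_b ∘ L_a ∘ L_b ∘ L_a.
Here g denotes the two-sided inverse of the bijection R_{1/a}^{∘'}. -/
theorem modified_op_alpha_eq_left_translations {L : Type*} (op : L → L → L) (one : L)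
    (hid : ∀ x, op one x = x ∧ op x one = x)
    (hright : ∀ x y : L, ∃! X, op X x = y)
    (hleft : ∀ x y : L, ∃! X, op x X = y)
    (rdiv : L → L → L)
    (hrdiv : ∀ x y : L, op (rdiv y x) x = y)
    (hrdiv_uniq : ∀ x y X : L, op X x = y → X = rdiv y x)
    (inv : L → L)
    (hinv_left : ∀ x y : L, op (inv x) (op x y) = y)
    (hinv_right : ∀ x y : L, op (op y x) (inv x) = y)
    (a b : L) (ha : rdiv one a ≠ one) (hb : b ≠ one)
    (η : L → L) (hη : Function.Bijective η) (hηe : η one = one)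
    (op' : L → L → L)
    (hop' : ∀ x y : L, (y ∉ ({rdiv one a, b} : Set L) → op' x y = op x y) ∧
      (y ∈ ({rdiv one a, b} : Set L) → op' x y = op y (η x)))
    (g : L → L)
    (hg_right : ∀ x : L, op' (g x) (rdiv one a) = x)
    (hg_left : ∀ x : L, g (op' x (rdiv one a)) = x) :
    ∀ x : L, op' (g (op' (g x) b)) b = op b (op a (op b (op a x))) := by
  have hmem1 : rdiv one a ∈ ({rdiv one a, b} : Set L) := Or.inl rfl
  have hmemb : b ∈ ({rdiv one a, b} : Set L) := Or.inr rfl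
  have hinv_ra : inv (rdiv one a) = a := by
    have h1 : op (rdiv one a) a = one := hrdiv a one
    have := hinv_left (rdiv one a) a
    rw [h1] at this
    rw [(hid (inv (rdiv one a))).2] at this
    exact this
  have hkey : ∀ x : L, η (g x) = op a x := by
    intro x
    have h1 := hg_right x
    rw [(hop' (g x) (rdiv one a)).2 hmem1] at h1
    have h2 := hinv_left (rdiv one a) (η (g x))
    rw [h1, hinv_ra] at h2
    exact h2.symm
  intro x
  rw [(hop' (g (op' (g x) b)) b).2 hmemb, hkey, (hop' (g x) b).2 hmemb, hkey]
end

section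
/- Let B ⊆ ℤ \ {0} and define a binary operation ∘' on ℤ by i ∘' j = i + j if j ∉ B, and i ∘' j = j − i if j ∈ B. Then (ℤ, ∘') is a right loop with identity 0: one has 0 ∘' i = i ∘' 0 = i for all i ∈ ℤ, and for all i, j ∈ ℤ the equation X ∘' i = j has a unique solution X ∈ ℤ (namely X = j − i if i ∉ B and X = i − j if i ∈ B). -/
/-- Let B ⊆ ℤ \ {0} and define i ∘' j = i + j if j ∉ B, i ∘' j = j - i
if j ∈ B.  Then (ℤ, ∘') is a right loop with identity 0, and the unique solution of
X ∘' i = j is X = j - i if i ∉ B and X = i - j if i ∈ B. -/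
theorem int_modified_right_loop (B : Set ℤ) (hB : B ⊆ {i | i ≠ 0})
    (op' : ℤ → ℤ → ℤ)
    (hop' : ∀ i j : ℤ, (j ∉ B → op' i j = i + j) ∧ (j ∈ B → op' i j = j - i)) :
    (∀ i : ℤ, op' 0 i = i ∧ op' i 0 = i) ∧
    (∀ i j : ℤ, ∃! X : ℤ, op' X i = j) ∧
    (∀ i j : ℤ, (i ∉ B → op' (j - i) i = j) ∧ (i ∈ B → op' (i - j) i = j)) := by
  have h0 : (0 : ℤ) ∉ B := fun h => (hB h) rfl
  refine ⟨fun i => ?_, fun i j => ?_, fun i j => ?_⟩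
  · by_cases hi : i ∈ B
    · exact ⟨by rw [(hop' 0 i).2 hi]; ring, by rw [(hop' i 0).1 h0]; ring⟩
    · exact ⟨by rw [(hop' 0 i).1 hi]; ring, by rw [(hop' i 0).1 h0]; ring⟩
  · by_cases hi : i ∈ B
    · refine ⟨i - j, show op' (i - j) i = j by rw [(hop' (i - j) i).2 hi]; ring, fun y hy => ?_⟩
      simp only [] at hy; rw [(hop' y i).2 hi] at hy <;> omega
    · refine ⟨j - i, show op' (j - i) i = j by rw [(hop' (j - i) i).1 hi]; ring, fun y hy => ?_⟩
      simp only [] at hy; rw [(hop' y i).1 hi] at hy <;> omega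
  · exact ⟨fun hi => by rw [(hop' (j - i) i).1 hi]; ring,
      fun hi => by rw [(hop' (i - j) i).2 hi]; ring⟩
end

section
/- In the infinite dihedral group D_∞ = DihedralGroup 0 with H = {r 0, sr 0}, a subset T ⊆ D_∞ containing the identity r 0 is a normalized right transversal of H (i.e., T contains exactly one element of each right coset of H and r 0 ∈ T) if and only if there exists a (unique) subset B ⊆ ℤ \ {0} such that T = {r i : i ∉ B} ∪ {sr i : i ∈ B}. -/
/-- The subgroup `H = {r 0, sr 0}` of `DihedralGroup 0`, as a set. -/
def Hset : Set (DihedralGroup 0) := {DihedralGroup.r 0, DihedralGroup.sr 0}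

/-- The normalized right transversal of `Hset` determined by `B ⊆ ℤ \ {0}`:
`T_B = {r i : i ∉ B} ∪ {sr i : i ∈ B}`. -/
def TB (B : Set ℤ) : Set (DihedralGroup 0) :=
  {x | match x with
    | .r i => i ∉ B
    | .sr i => i ∈ B}

lemma mem_TB_r (B : Set ℤ) (i : ZMod 0) : DihedralGroup.r i ∈ TB B ↔ i ∉ B := Iff.rfl

lemma mem_TB_sr (B : Set ℤ) (i : ZMod 0) : DihedralGroup.sr i ∈ TB B ↔ i ∈ B := Iff.rfl

lemma coset_mem (t x : DihedralGroup 0) :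
    (∃ h ∈ Hset, t = h * x) ↔
      match x with
      | .r i => t = .r i ∨ t = .sr i
      | .sr i => t = .r i ∨ t = .sr i := by
  cases x with
  | r i => simp [Hset, DihedralGroup.r_mul_r, DihedralGroup.sr_mul_r]
  | sr i => simp [Hset, DihedralGroup.r_mul_sr, DihedralGroup.sr_mul_sr, or_comm]

/-- A subset T of D_∞ = DihedralGroup 0 is a normalized right transversal
of H = {r 0, sr 0} (contains the identity r 0 and exactly one element of each right
coset of H) iff there is a unique B ⊆ ℤ \ {0} with T = {r i : i ∉ B} ∪ {sr i : i ∈ B}. -/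
theorem dihedral_nrt_iff (T : Set (DihedralGroup 0)) :
    (DihedralGroup.r 0 ∈ T ∧
      ∀ x : DihedralGroup 0, ∃! t : DihedralGroup 0, t ∈ T ∧ ∃ h ∈ Hset, t = h * x) ↔
    ∃! B : Set ℤ, B ⊆ {i | i ≠ 0} ∧ T = TB B := by
  constructor
  · rintro ⟨h0, huniq⟩
    have key : ∀ i : ZMod 0, (DihedralGroup.r i ∈ T) ↔ (DihedralGroup.sr i ∉ T) := by
      intro i
      obtain ⟨t, ⟨htT, htc⟩, hu⟩ := huniq (.r i)
      rw [coset_mem] at htc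
      constructor
      · intro hr hs
        have h1 := hu (.r i) ⟨hr, (coset_mem _ _).2 (Or.inl rfl)⟩
        have h2 := hu (.sr i) ⟨hs, (coset_mem _ _).2 (Or.inr rfl)⟩
        rw [← h1] at h2
        simp at h2
      · intro hs
        rcases htc with h | h
        · exact h ▸ htT
        · rw [h] at htT; exact absurd htT hs
    refine ⟨{i | DihedralGroup.sr i ∈ T}, ⟨?_, ?_⟩, ?_⟩
    · intro i hi hne
      subst hne
      exact (key 0).1 h0 hi
    · ext x
      cases x with
      | r i => exact key i
      | sr i => exact Iff.rfl
    · rintro B' ⟨hB'ne, rfl⟩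
      ext i
      simp only [Set.mem_setOf_eq, mem_TB_sr]
      exact (mem_TB_sr B' i).symm
  · rintro ⟨B, ⟨hBne, rfl⟩, _⟩
    have h0B : (0 : ℤ) ∉ B := fun h => hBne h rfl
    constructor
    · exact h0B
    · intro x
      cases x with
      | r i =>
        by_cases hi : i ∈ B
        · refine ⟨.sr i, ⟨hi, (coset_mem _ _).2 (Or.inr rfl)⟩, ?_⟩
          rintro t ⟨htT, htc⟩
          rcases (coset_mem _ _).1 htc with h | h
          · rw [h] at htT; exact absurd hi htT
          · exact h
        · refine ⟨.r i, ⟨hi, (coset_mem _ _).2 (Or.inl rfl)⟩, ?_⟩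
          rintro t ⟨htT, htc⟩
          rcases (coset_mem _ _).1 htc with h | h
          · exact h
          · rw [h] at htT; exact absurd htT hi
      | sr i =>
        by_cases hi : i ∈ B
        · refine ⟨.sr i, ⟨hi, (coset_mem _ _).2 (Or.inr rfl)⟩, ?_⟩
          rintro t ⟨htT, htc⟩
          rcases (coset_mem _ _).1 htc with h | h
          · rw [h] at htT; exact absurd hi htT
          · exact h
        · refine ⟨.r i, ⟨hi, (coset_mem _ _).2 (Or.inl rfl)⟩, ?_⟩
          rintro t ⟨htT, htc⟩
          rcases (coset_mem _ _).1 htc with h | h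
          · exact h
          · rw [h] at htT; exact absurd htT hi
end
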